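/- Let p,q ∈ [1,∞], let B be an open, relatively compact, symmetric neighbourhood of e, and let π be a U–V uniform partition of G (for some open relatively compact neighbourhoods U,V of e with cl(U) ⊆ V). Then there exist constants C₁ = C₁(B,π,p,q) > 0 and C₂ = C₂(B,π,p,q) > 0 such that for every measurable function f on G: C₁ · _B‖f‖_{q,p} ≤ ‖f‖^π_{q,p} ≤ C₂ · _B‖f‖_{q,p}. -/

import Mathlib

open MeasureTheory ENNReal NNReal Set Filter Topology Pointwise

variable {G : Type*} [Group G] [TopologicalSpace G] [IsTopologicalGroup G]
  [T2Space G] [LocallyCompactSpace G] [SigmaCompactSpace G]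
  [MeasurableSpace G] [BorelSpace G]

section Helpers

variable {α : Type*} [MeasurableSpace α] {μ : Measure α} {q : ℝ≥0∞}

lemma eLpNorm_indicator_mono_set {f : α → ℂ} {A C : Set α} (h : A ⊆ C) :
    eLpNorm (A.indicator f) q μ ≤ eLpNorm (C.indicator f) q μ := by
  refine eLpNorm_mono fun z => ?_
  by_cases hz : z ∈ A
  · rw [Set.indicator_of_mem hz, Set.indicator_of_mem (h hz)]
  · rw [Set.indicator_of_notMem hz]; simp

lemma eLpNorm_indicator_biUnion_le {f : α → ℂ} (hf : AEStronglyMeasurable f μ)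
    (hq : 1 ≤ q) {ι : Type*} (s : Finset ι) (T : ι → Set α)
    (hT : ∀ i ∈ s, MeasurableSet (T i)) {A : Set α} (hA : A ⊆ ⋃ i ∈ s, T i) :
    eLpNorm (A.indicator f) q μ ≤ ∑ i ∈ s, eLpNorm ((T i).indicator f) q μ := by
  have h1 : eLpNorm (A.indicator f) q μ
      ≤ eLpNorm (∑ i ∈ s, (T i).indicator (fun y => ‖f y‖)) q μ := by
    refine eLpNorm_mono fun z => ?_
    by_cases hz : z ∈ A
    · rw [Set.indicator_of_mem hz]
      obtain ⟨i, his, hzi⟩ : ∃ i ∈ s, z ∈ T i := by simpa using hA hz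
      have hle : ‖f z‖ ≤ ∑ j ∈ s, (T j).indicator (fun y => ‖f y‖) z := by
        have h0 := Finset.single_le_sum
          (f := fun j => (T j).indicator (fun y => ‖f y‖) z)
          (fun j _ => Set.indicator_nonneg (fun y _ => norm_nonneg _) z) his
        simp only [Set.indicator_of_mem hzi] at h0
        exact h0
      calc ‖f z‖ ≤ ∑ j ∈ s, (T j).indicator (fun y => ‖f y‖) z := hle
        _ ≤ ‖(∑ j ∈ s, (T j).indicator (fun y => ‖f y‖)) z‖ := by
            rw [Finset.sum_apply]; exact le_abs_self _
    · rw [Set.indicator_of_notMem hz]; simp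
  refine h1.trans ?_
  have h2 := eLpNorm_sum_le (μ := μ) (s := s)
    (f := fun i => (T i).indicator (fun y => ‖f y‖))
    (fun i hi => (hf.norm).indicator (hT i hi)) hq
  refine h2.trans (le_of_eq (Finset.sum_congr rfl fun i hi => ?_))
  rw [← eLpNorm_norm ((T i).indicator f)]
  congr 1
  ext z
  rw [norm_indicator_eq_indicator_norm]

lemma tsum_lintegral_le' {ι : Type*} [Countable ι] (f : ι → α → ℝ≥0∞) :
    ∑' i, ∫⁻ a, f i a ∂μ ≤ ∫⁻ a, ∑' i, f i a ∂μ := by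
  rw [ENNReal.tsum_eq_iSup_sum]
  refine iSup_le fun t => ?_
  have h1 : ∑ i ∈ t, ∫⁻ a, f i a ∂μ ≤ ∫⁻ a, ∑ i ∈ t, f i a ∂μ := by
    classical
    induction t using Finset.induction_on with
    | empty => simp
    | insert _ _ h ih =>
      rename_i a t'
      rw [Finset.sum_insert h]
      calc ∫⁻ x, f a x ∂μ + ∑ i ∈ t', ∫⁻ x, f i x ∂μ
          ≤ ∫⁻ x, f a x ∂μ + ∫⁻ x, ∑ i ∈ t', f i x ∂μ := add_le_add_right ih _
        _ ≤ ∫⁻ x, f a x + ∑ i ∈ t', f i x ∂μ := le_lintegral_add _ _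
        _ = ∫⁻ x, ∑ i ∈ insert a t', f i x ∂μ := by
            simp [Finset.sum_insert h]
  exact h1.trans (lintegral_mono fun x => ENNReal.sum_le_tsum t)

lemma sum_rpow_le {ι : Type*} (t : Finset ι) (a : ι → ℝ≥0∞) {r : ℝ} (hr : 0 < r) :
    (∑ i ∈ t, a i) ^ r ≤ (t.card : ℝ≥0∞) ^ r * ∑ i ∈ t, a i ^ r := by
  have h1 : ∀ i ∈ t, a i ≤ (∑ j ∈ t, a j ^ r) ^ (1/r) := by
    intro i hi
    have h2 : a i ^ r ≤ ∑ j ∈ t, a j ^ r :=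
      Finset.single_le_sum (f := fun j => a j ^ r) (fun j _ => by simp) hi
    calc a i = (a i ^ r) ^ (1/r) := by
          rw [one_div, ENNReal.rpow_rpow_inv hr.ne']
      _ ≤ (∑ j ∈ t, a j ^ r) ^ (1/r) := ENNReal.rpow_le_rpow h2 (by positivity)
  have h3 : ∑ i ∈ t, a i ≤ (t.card : ℝ≥0∞) * (∑ j ∈ t, a j ^ r) ^ (1/r) := by
    calc ∑ i ∈ t, a i ≤ ∑ _i ∈ t, (∑ j ∈ t, a j ^ r) ^ (1/r) :=
          Finset.sum_le_sum h1
      _ = (t.card : ℝ≥0∞) * (∑ j ∈ t, a j ^ r) ^ (1/r) := by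
          rw [Finset.sum_const, nsmul_eq_mul]
  calc (∑ i ∈ t, a i) ^ r ≤ ((t.card : ℝ≥0∞) * (∑ j ∈ t, a j ^ r) ^ (1/r)) ^ r :=
        ENNReal.rpow_le_rpow h3 hr.le
    _ = (t.card : ℝ≥0∞) ^ r * ∑ j ∈ t, a j ^ r := by
        rw [ENNReal.mul_rpow_of_nonneg _ _ hr.le, one_div, ENNReal.rpow_inv_rpow hr.ne']

end Helpers

/-- The norm `_B‖f‖_{q,p}`. -/
noncomputable def blockNorm {E : Type*} [NormedAddCommGroup E]
    (μ : Measure G) (q p : ℝ≥0∞) (B : Set G) (f : G → E) : ℝ≥0∞ :=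
  if p = ∞ then essSup (fun y => eLpNorm ((y • B).indicator f) q μ) μ
  else (∫⁻ y, eLpNorm ((y • B).indicator f) q μ ^ p.toReal ∂μ) ^ (1 / p.toReal)

/-- The norm `‖f‖^π_{q,p}` associated to a partition `π`. -/
noncomputable def partNorm {E : Type*} [NormedAddCommGroup E]
    (μ : Measure G) (q p : ℝ≥0∞) (π : Set (Set G)) (f : G → E) : ℝ≥0∞ :=
  if p = ∞ then ⨆ A ∈ π, eLpNorm (A.indicator f) q μ
  else (∑' A : π, eLpNorm ((A : Set G).indicator f) q μ ^ p.toReal) ^ (1 / p.toReal)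

/-- `π` is a `U`–`V` uniform partition of `G`. -/
def IsUniformPartition (π : Set (Set G)) (U V : Set G) : Prop :=
  π.Countable ∧ (∀ A ∈ π, MeasurableSet A) ∧ π.PairwiseDisjoint id ∧
    ⋃₀ π = univ ∧ ∀ A ∈ π, ∃ x ∈ A, x • U ⊆ A ∧ A ⊆ x • V

/-- The ball `B(x,r)` for the homogeneous norm `nm`. -/
def gball (nm : G → ℝ) (x : G) (r : ℝ) : Set G := {y | nm (x⁻¹ * y) < r}

/-- The norm `‖f‖_{q,p,α}`. -/
noncomputable def alphaNorm {E : Type*} [NormedAddCommGroup E]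
    (μ : Measure G) (nm : G → ℝ) (πr : ℝ → Set (Set G))
    (q p α : ℝ≥0∞) (f : G → E) : ℝ≥0∞ :=
  ⨆ (r : ℝ) (_ : 0 < r),
    μ (gball nm 1 r) ^ (α⁻¹.toReal - q⁻¹.toReal) * partNorm μ q p (πr r) f

/-- The decreasing rearrangement `f*`. -/
noncomputable def rearr (μ : Measure G) (f : G → ℂ) (t : ℝ≥0∞) : ℝ≥0∞ :=
  sInf {s : ℝ≥0∞ | 0 < s ∧ μ {x | s < (‖f x‖₊ : ℝ≥0∞)} ≤ t}

/-- The weak Lorentz quasinorm `‖f‖*_{α,∞}`. -/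
noncomputable def weakNorm (μ : Measure G) (α : ℝ≥0∞) (f : G → ℂ) : ℝ≥0∞ :=
  ⨆ (t : ℝ≥0∞) (_ : 0 < t) (_ : t ≠ ∞), t ^ α⁻¹.toReal * rearr μ f t

theorem statement3
    (μ : Measure G) [μ.IsHaarMeasure]
    (q p : ℝ≥0∞) (hq1 : 1 ≤ q) (hp1 : 1 ≤ p)
    (B : Set G) (hBopen : IsOpen B) (hBmem : (1 : G) ∈ B)
    (hBcpt : IsCompact (closure B)) (hBsymm : B⁻¹ = B)
    (U V : Set G) (hUopen : IsOpen U) (hUmem : (1 : G) ∈ U) (hUcpt : IsCompact (closure U))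
    (hVopen : IsOpen V) (hVmem : (1 : G) ∈ V) (hVcpt : IsCompact (closure V))
    (hUV : closure U ⊆ V)
    (π : Set (Set G)) (hπ : IsUniformPartition π U V) :
    ∃ C₁ C₂ : ℝ≥0, 0 < C₁ ∧ 0 < C₂ ∧ ∀ f : G → ℂ, AEStronglyMeasurable f μ →
      (C₁ : ℝ≥0∞) * blockNorm μ q p B f ≤ partNorm μ q p π f ∧
        partNorm μ q p π f ≤ (C₂ : ℝ≥0∞) * blockNorm μ q p B f := by
  classical
  obtain ⟨hcnt, hmeas, hdisjp, hcover, hpts⟩ := hπ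
  haveI : Countable ↥π := hcnt.to_subtype
  choose! xp hxmem hxU hxV using hpts
  -- basic measure facts
  have hcfin : ∀ {S K : Set G}, S ⊆ K → IsCompact K → μ S ≠ ∞ :=
    fun hSK hK => ((measure_mono hSK).trans_lt hK.measure_lt_top).ne
  have hμU0 : μ U ≠ 0 := (hUopen.measure_pos μ ⟨1, hUmem⟩).ne'
  have hμUt : μ U ≠ ∞ := hcfin subset_closure hUcpt
  have exists_nat : ∀ c : ℝ≥0∞, c ≠ ∞ → ∃ n : ℕ, c ≤ n * μ U := by
    intro c hc
    obtain ⟨n, hn⟩ := ENNReal.exists_nat_gt ((ENNReal.div_lt_top hc hμU0).ne)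
    refine ⟨n, ?_⟩
    calc c = c / μ U * μ U := (ENNReal.div_mul_cancel hμU0 hμUt).symm
      _ ≤ n * μ U := mul_le_mul_left hn.le _
  have key_count : ∀ (K : Set G) (y : G) (t : Finset ↥π),
      (∀ E ∈ t, xp ↑E ∈ y • K) → (t.card : ℝ≥0∞) * μ U ≤ μ (K * U) := by
    intro K y t ht
    have hd : (↑t : Set ↥π).PairwiseDisjoint (fun E : ↥π => xp ↑E • U) := by
      intro E _ E' _ hne
      exact (hdisjp E.2 E'.2 (fun h => hne (Subtype.ext h))).mono
        (hxU _ E.2) (hxU _ E'.2)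
    have hsub : (⋃ E ∈ t, xp ↑E • U) ⊆ y • (K * U) := by
      intro z hz
      simp only [Set.mem_iUnion] at hz
      obtain ⟨E, hEt, hzE⟩ := hz
      obtain ⟨u, hu, rfl⟩ := hzE
      obtain ⟨k, hk, hky⟩ := ht E hEt
      refine ⟨k * u, Set.mul_mem_mul hk hu, ?_⟩
      simp only [smul_eq_mul] at hky ⊢
      rw [← hky]; group
    calc (t.card : ℝ≥0∞) * μ U = ∑ _E ∈ t, μ U := by
          rw [Finset.sum_const, nsmul_eq_mul]
      _ = ∑ E ∈ t, μ (xp ↑E • U) := by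
          refine Finset.sum_congr rfl fun E _ => ?_
          rw [measure_smul]
      _ = μ (⋃ E ∈ t, xp ↑E • U) :=
          (measure_biUnion_finset hd fun E _ => (hUopen.smul _).measurableSet).symm
      _ ≤ μ (y • (K * U)) := measure_mono hsub
      _ = μ (K * U) := by rw [measure_smul]
  have card_of : ∀ (n : ℕ) (K : Set G), μ (K * U) ≤ n * μ U →
      ∀ (y : G) (t : Finset ↥π), (∀ E ∈ t, xp ↑E ∈ y • K) → t.card ≤ n := by
    intro n K hKn y t ht
    have h1 := (key_count K y t ht).trans hKn
    have h2 : (t.card : ℝ≥0∞) ≤ n := (ENNReal.mul_le_mul_iff_left hμU0 hμUt).mp h1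
    exact_mod_cast h2
  -- constant M for the lower bound direction
  have hK₁fin : μ ((B * V⁻¹) * U) ≠ ∞ := by
    refine hcfin ?_ ((hBcpt.mul hVcpt.inv).mul hUcpt)
    exact Set.mul_subset_mul (Set.mul_subset_mul subset_closure
      (Set.inv_subset_inv.mpr subset_closure)) subset_closure
  obtain ⟨M, hM⟩ := exists_nat _ hK₁fin
  have hVB0 : μ (V * B) ≠ 0 :=
    ((hBopen.mul_left (s := V)).measure_pos μ ⟨1 * 1, Set.mul_mem_mul hVmem hBmem⟩).ne'
  have hVBt : μ (V * B) ≠ ∞ :=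
    hcfin (Set.mul_subset_mul subset_closure subset_closure) (hVcpt.mul hBcpt)
  -- the auxiliary neighbourhood W
  obtain ⟨W₀, hW₀open, hW₀mem, hW₀mul⟩ :=
    exists_open_nhds_one_mul_subset (hBopen.mem_nhds hBmem)
  set W : Set G := (W₀ ∩ B) ∩ (W₀ ∩ B)⁻¹ with hWdef
  have hWopen : IsOpen W := (hW₀open.inter hBopen).inter (hW₀open.inter hBopen).inv
  have hWmem : (1 : G) ∈ W := by
    refine ⟨⟨hW₀mem, hBmem⟩, ?_⟩
    rw [Set.mem_inv, inv_one]
    exact ⟨hW₀mem, hBmem⟩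
  have hWsymm : W⁻¹ = W := by
    rw [hWdef, Set.inter_inv, inv_inv]
    exact Set.inter_comm _ _
  have hWB : W ⊆ B := fun z hz => hz.1.2
  have hWW₀ : W ⊆ W₀ := fun z hz => hz.1.1
  have hWW : W * W ⊆ B := (Set.mul_subset_mul hWW₀ hWW₀).trans hW₀mul
  have hμW0 : μ W ≠ 0 := (hWopen.measure_pos μ ⟨1, hWmem⟩).ne'
  have hμWt : μ W ≠ ∞ := hcfin (hWB.trans subset_closure) hBcpt
  obtain ⟨s, hscov⟩ := hVcpt.elim_finite_subcover (fun g : G => g • W)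
    (fun g => hWopen.smul g) (fun v _ => Set.mem_iUnion.mpr ⟨v, ⟨1, hWmem, by simp⟩⟩)
  have hsV : V ⊆ ⋃ g ∈ s, g • W := subset_closure.trans hscov
  have hNall : ∀ g : G, ∃ n : ℕ, μ ((W * {g⁻¹}) * U) ≤ n * μ U := by
    intro g
    have hsub : (W * {g⁻¹}) * U ⊆ (closure B * {g⁻¹}) * closure U :=
      Set.mul_subset_mul (Set.mul_subset_mul (hWB.trans subset_closure)
        Subset.rfl) subset_closure
    exact exists_nat _ (hcfin hsub ((hBcpt.mul isCompact_singleton).mul hUcpt))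
  choose Nf hNf using hNall
  -- lower bound structural decomposition
  have lower_struct : ∀ (f : G → ℂ), AEStronglyMeasurable f μ → ∀ y : G,
      ∃ t : Finset ↥π, t.card ≤ M ∧ (∀ E ∈ t, y ∈ (↑E : Set G) * B) ∧
        eLpNorm ((y • B).indicator f) q μ
          ≤ ∑ E ∈ t, eLpNorm ((↑E : Set G).indicator f) q μ := by
    intro f hf y
    set Sy : Set ↥π := {E : ↥π | ((↑E : Set G) ∩ y • B).Nonempty} with hSydef
    have hSK : ∀ E ∈ Sy, xp ↑E ∈ y • (B * V⁻¹) := by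
      intro E hE
      obtain ⟨z, hzE, hzB⟩ := hE
      obtain ⟨v, hv, hvz⟩ := Set.mem_smul_set.mp (hxV ↑E E.2 hzE)
      obtain ⟨b, hb, hbz⟩ := Set.mem_smul_set.mp hzB
      refine ⟨b * v⁻¹, Set.mul_mem_mul hb (Set.inv_mem_inv.mpr hv), ?_⟩
      simp only [smul_eq_mul] at hvz hbz ⊢
      have h' : xp ↑E * v = y * b := by rw [hvz, hbz]
      have h'' : xp ↑E = y * b * v⁻¹ := by
        rw [← h']; group
      rw [h'']; group
    have hcard' : ∀ t : Finset ↥π, ↑t ⊆ Sy → t.card ≤ M :=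
      fun t ht => card_of M (B * V⁻¹) hM y t fun E hE => hSK E (ht hE)
    have hfinS : Sy.Finite := by
      by_contra h
      obtain ⟨t, hts, htc⟩ := Set.Infinite.exists_subset_card_eq h (M + 1)
      have := hcard' t hts
      omega
    refine ⟨hfinS.toFinset, hcard' _ (by simp), ?_, ?_⟩
    · intro E hE
      rw [Set.Finite.mem_toFinset] at hE
      obtain ⟨z, hzE, hzB⟩ := hE
      obtain ⟨b, hb, hbz⟩ := Set.mem_smul_set.mp hzB
      have hbinv : b⁻¹ ∈ B := by rw [← hBsymm]; exact Set.inv_mem_inv.mpr hb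
      refine ⟨z, hzE, b⁻¹, hbinv, ?_⟩
      simp only [smul_eq_mul] at hbz
      rw [← hbz]; group
    · refine eLpNorm_indicator_biUnion_le hf hq1 hfinS.toFinset
        (fun E : ↥π => (↑E : Set G)) (fun E _ => hmeas ↑E E.2) ?_
      intro z hz
      obtain ⟨A, hAπ, hzA⟩ : ∃ A ∈ π, z ∈ A := by
        have hz' : z ∈ ⋃₀ π := by rw [hcover]; trivial
        simpa [Set.mem_sUnion] using hz'
      refine Set.mem_iUnion₂.mpr ⟨⟨A, hAπ⟩, ?_, hzA⟩
      rw [Set.Finite.mem_toFinset]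
      exact ⟨z, hzA, hz⟩
  -- upper bound structural facts
  have hzW_subset : ∀ z y : G, y ∈ z • W → z • W ⊆ y • B := by
    intro z y hy u hu
    obtain ⟨w, hw, hwy⟩ := Set.mem_smul_set.mp hy
    obtain ⟨w', hw', hwu⟩ := Set.mem_smul_set.mp hu
    have hwinv : w⁻¹ ∈ W := by rw [← hWsymm]; exact Set.inv_mem_inv.mpr hw
    refine ⟨w⁻¹ * w', hWW (Set.mul_mem_mul hwinv hw'), ?_⟩
    simp only [smul_eq_mul] at hwy hwu ⊢
    rw [← hwy, ← hwu]; group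
  have hEcov : ∀ E : ↥π, (↑E : Set G) ⊆ ⋃ g ∈ s, (xp ↑E * g) • W := by
    intro E z hz
    obtain ⟨v, hv, hvz⟩ := Set.mem_smul_set.mp (hxV ↑E E.2 hz)
    obtain ⟨g, hgs, hgv⟩ := Set.mem_iUnion₂.mp (hsV hv)
    obtain ⟨w, hw, hwv⟩ := Set.mem_smul_set.mp hgv
    refine Set.mem_iUnion₂.mpr ⟨g, hgs, ⟨w, hw, ?_⟩⟩
    simp only [smul_eq_mul] at hvz hwv ⊢
    rw [← hvz, ← hwv]; group
  have overlap : ∀ (g : G) (y : G),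
      (∑' E : ↥π, ((xp ↑E * g) • W).indicator (fun _ => (1:ℝ≥0∞)) y) ≤ Nf g := by
    intro g y
    rw [ENNReal.tsum_eq_iSup_sum]
    refine iSup_le fun t => ?_
    have heq : ∑ E ∈ t, ((xp ↑E * g) • W).indicator (fun _ => (1:ℝ≥0∞)) y
        = ((t.filter (fun E : ↥π => y ∈ (xp ↑E * g) • W)).card : ℝ≥0∞) := by
      rw [← Finset.sum_boole]
      refine Finset.sum_congr rfl fun E _ => ?_
      by_cases hy : y ∈ (xp ↑E * g) • W <;> simp [Set.indicator_apply, hy]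
    rw [heq]
    have hle : (t.filter (fun E : ↥π => y ∈ (xp ↑E * g) • W)).card ≤ Nf g := by
      refine card_of (Nf g) (W * {g⁻¹}) (hNf g) y _ ?_
      intro E hE
      rw [Finset.mem_filter] at hE
      obtain ⟨w, hw, hwy⟩ := Set.mem_smul_set.mp hE.2
      have hwinv : w⁻¹ ∈ W := by rw [← hWsymm]; exact Set.inv_mem_inv.mpr hw
      refine ⟨w⁻¹ * g⁻¹, Set.mul_mem_mul hwinv rfl, ?_⟩
      simp only [smul_eq_mul] at hwy ⊢
      rw [← hwy]; group
    exact_mod_cast hle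
  -- the main two-sided estimate with `ℝ≥0∞` constants
  have main : ∃ D₁ D₂ : ℝ≥0∞, D₁ ≠ 0 ∧ D₁ ≠ ∞ ∧ D₂ ≠ 0 ∧ D₂ ≠ ∞ ∧
      ∀ f : G → ℂ, AEStronglyMeasurable f μ →
        blockNorm μ q p B f ≤ D₁ * partNorm μ q p π f ∧
        partNorm μ q p π f ≤ D₂ * blockNorm μ q p B f := by
    rcases eq_or_ne p ∞ with hp | hp
    · -- p = ∞
      refine ⟨(M : ℝ≥0∞) + 1, (s.card : ℝ≥0∞) + 1, by simp, by simp, by simp, by simp, ?_⟩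
      intro f hf
      constructor
      · simp only [blockNorm, partNorm, if_pos hp]
        refine essSup_le_of_ae_le _ (Filter.Eventually.of_forall fun y => ?_)
        obtain ⟨t, htc, _, htle⟩ := lower_struct f hf y
        calc eLpNorm ((y • B).indicator f) q μ
            ≤ ∑ E ∈ t, eLpNorm ((↑E : Set G).indicator f) q μ := htle
          _ ≤ ∑ _E ∈ t, ⨆ A ∈ π, eLpNorm (A.indicator f) q μ :=
              Finset.sum_le_sum fun E _ =>
                le_iSup₂ (f := fun A (_ : A ∈ π) => eLpNorm (A.indicator f) q μ) ↑E E.2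
          _ = (t.card : ℝ≥0∞) * ⨆ A ∈ π, eLpNorm (A.indicator f) q μ := by
              rw [Finset.sum_const, nsmul_eq_mul]
          _ ≤ ((M : ℝ≥0∞) + 1) * ⨆ A ∈ π, eLpNorm (A.indicator f) q μ := by
              refine mul_le_mul_left ?_ _
              exact_mod_cast htc.trans (Nat.le_succ M)
      · simp only [blockNorm, partNorm, if_pos hp]
        refine iSup₂_le fun A hA => ?_
        have h1 : eLpNorm (A.indicator f) q μ
            ≤ ∑ g ∈ s, eLpNorm (((xp A * g) • W).indicator f) q μ :=
          eLpNorm_indicator_biUnion_le hf hq1 s _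
            (fun g _ => (hWopen.smul _).measurableSet) (hEcov ⟨A, hA⟩)
        have h2 : ∀ g ∈ s, eLpNorm (((xp A * g) • W).indicator f) q μ
            ≤ essSup (fun y => eLpNorm ((y • B).indicator f) q μ) μ := by
          intro g _
          by_contra hlt
          push_neg at hlt
          have hae := ae_lt_of_essSup_lt hlt
          have hnull : μ {y | ¬ (eLpNorm ((y • B).indicator f) q μ
              < eLpNorm (((xp A * g) • W).indicator f) q μ)} = 0 := by
            exact hae
          have hpos : μ ((xp A * g) • W) ≠ 0 := by rw [measure_smul]; exact hμW0
          have hns : ¬ ((xp A * g) • W ⊆ {y | ¬ (eLpNorm ((y • B).indicator f) q μ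
              < eLpNorm (((xp A * g) • W).indicator f) q μ)}) := by
            intro hsub
            exact hpos (measure_mono_null hsub hnull)
          obtain ⟨y, hyW, hyS⟩ := Set.not_subset.mp hns
          simp only [Set.mem_setOf_eq, not_not] at hyS
          have : eLpNorm (((xp A * g) • W).indicator f) q μ
              ≤ eLpNorm ((y • B).indicator f) q μ :=
            eLpNorm_indicator_mono_set (hzW_subset _ y hyW)
          exact absurd (this.trans_lt hyS) (lt_irrefl _)
        calc eLpNorm (A.indicator f) q μ
            ≤ ∑ g ∈ s, eLpNorm (((xp A * g) • W).indicator f) q μ := h1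
          _ ≤ ∑ _g ∈ s, essSup (fun y => eLpNorm ((y • B).indicator f) q μ) μ :=
              Finset.sum_le_sum h2
          _ = (s.card : ℝ≥0∞) * essSup (fun y => eLpNorm ((y • B).indicator f) q μ) μ := by
              rw [Finset.sum_const, nsmul_eq_mul]
          _ ≤ ((s.card : ℝ≥0∞) + 1) * essSup (fun y => eLpNorm ((y • B).indicator f) q μ) μ :=
              mul_le_mul_left (le_self_add) _
    · -- p ≠ ∞
      have hp0 : p ≠ 0 := (zero_lt_one.trans_le hp1).ne'
      have hpt : 0 < p.toReal := ENNReal.toReal_pos hp0 hp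
      set pt := p.toReal with hptdef
      have hrfacts : ∀ x : ℝ≥0∞, x ≠ 0 → x ≠ ∞ → x ^ (1/pt) ≠ 0 ∧ x ^ (1/pt) ≠ ∞ := by
        intro x h0 ht
        constructor
        · simp only [ne_eq, ENNReal.rpow_eq_zero_iff, not_or, not_and]
          constructor
          · intro h; exact absurd h h0
          · intro h; exact absurd h ht
        · simp only [ne_eq, ENNReal.rpow_eq_top_iff, not_or, not_and]
          constructor
          · intro h; exact absurd h h0
          · intro h; exact absurd h ht
      have hSN : (∑ g ∈ s, (Nf g : ℝ≥0∞)) + 1 ≠ ∞ := by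
        rw [← Nat.cast_sum]
        simp [ENNReal.add_eq_top]
      have hWinv0 : (μ W)⁻¹ ≠ 0 := ENNReal.inv_ne_zero.mpr hμWt
      have hWinvt : (μ W)⁻¹ ≠ ∞ := ENNReal.inv_ne_top.mpr hμW0
      have hD₂e0 : (μ W)⁻¹ * ((∑ g ∈ s, (Nf g : ℝ≥0∞)) + 1) ≠ 0 := by
        simp [hWinv0]
      have hD₂et : (μ W)⁻¹ * ((∑ g ∈ s, (Nf g : ℝ≥0∞)) + 1) ≠ ∞ :=
        ENNReal.mul_ne_top hWinvt hSN
      refine ⟨((M : ℝ≥0∞) + 1) * μ (V * B) ^ (1/pt),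
        ((s.card : ℝ≥0∞) + 1) * ((μ W)⁻¹ * ((∑ g ∈ s, (Nf g : ℝ≥0∞)) + 1)) ^ (1/pt),
        ?_, ?_, ?_, ?_, ?_⟩
      · exact mul_ne_zero (by simp) (hrfacts _ hVB0 hVBt).1
      · exact ENNReal.mul_ne_top (by simp) (hrfacts _ hVB0 hVBt).2
      · exact mul_ne_zero (by simp) (hrfacts _ hD₂e0 hD₂et).1
      · exact ENNReal.mul_ne_top (by simp) (hrfacts _ hD₂e0 hD₂et).2
      intro f hf
      set F : G → ℝ≥0∞ := fun y => eLpNorm ((y • B).indicator f) q μ with hFdef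
      set a : ↥π → ℝ≥0∞ := fun E => eLpNorm ((↑E : Set G).indicator f) q μ with hadef
      have rpow_final : ∀ X Y D : ℝ≥0∞, X ≤ D ^ pt * Y → X ^ (1/pt) ≤ D * Y ^ (1/pt) := by
        intro X Y D h
        calc X ^ (1/pt) ≤ (D ^ pt * Y) ^ (1/pt) := ENNReal.rpow_le_rpow h (by positivity)
          _ = D * Y ^ (1/pt) := by
              rw [ENNReal.mul_rpow_of_nonneg _ _ (by positivity), one_div,
                ENNReal.rpow_rpow_inv hpt.ne']
      have Dsplit : ∀ c e : ℝ≥0∞, (c * e ^ (1/pt)) ^ pt = c ^ pt * e := by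
        intro c e
        rw [ENNReal.mul_rpow_of_nonneg _ _ hpt.le, one_div, ENNReal.rpow_inv_rpow hpt.ne']
      constructor
      · -- lower bound
        have hlow : ∫⁻ y, F y ^ pt ∂μ
            ≤ (((M : ℝ≥0∞) + 1) ^ pt * μ (V * B)) * ∑' E : ↥π, a E ^ pt := by
          have hMt : ((M : ℝ≥0∞) + 1) ^ pt ≠ ∞ := by
            refine ENNReal.rpow_ne_top_of_nonneg hpt.le ?_
            simp [ENNReal.add_eq_top]
          have hptw : ∀ y, F y ^ pt ≤ ((M : ℝ≥0∞) + 1) ^ pt *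
              ∑' E : ↥π, ((↑E : Set G) * B).indicator (fun _ => a E ^ pt) y := by
            intro y
            obtain ⟨t, htc, htm, htle⟩ := lower_struct f hf y
            calc F y ^ pt ≤ (∑ E ∈ t, a E) ^ pt := ENNReal.rpow_le_rpow htle hpt.le
              _ ≤ (t.card : ℝ≥0∞) ^ pt * ∑ E ∈ t, a E ^ pt := sum_rpow_le t a hpt
              _ ≤ ((M : ℝ≥0∞) + 1) ^ pt *
                  ∑' E : ↥π, ((↑E : Set G) * B).indicator (fun _ => a E ^ pt) y := by
                  refine mul_le_mul' (ENNReal.rpow_le_rpow ?_ hpt.le) ?_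
                  · exact_mod_cast htc.trans (Nat.le_succ M)
                  · calc ∑ E ∈ t, a E ^ pt
                        = ∑ E ∈ t, ((↑E : Set G) * B).indicator (fun _ => a E ^ pt) y :=
                          Finset.sum_congr rfl fun E hE => by
                            rw [Set.indicator_of_mem (htm E hE)]
                      _ ≤ _ := ENNReal.sum_le_tsum t
          have hsubVB : ∀ E : ↥π, (↑E : Set G) * B ⊆ xp ↑E • (V * B) := by
            intro E u hu
            obtain ⟨z, hz, b, hb, rfl⟩ := hu
            obtain ⟨v, hv, hvz⟩ := Set.mem_smul_set.mp (hxV ↑E E.2 hz)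
            refine ⟨v * b, Set.mul_mem_mul hv hb, ?_⟩
            simp only [smul_eq_mul] at hvz ⊢
            rw [← hvz]; group
          calc ∫⁻ y, F y ^ pt ∂μ
              ≤ ∫⁻ y, ((M : ℝ≥0∞) + 1) ^ pt *
                ∑' E : ↥π, ((↑E : Set G) * B).indicator (fun _ => a E ^ pt) y ∂μ :=
                lintegral_mono hptw
            _ = ((M : ℝ≥0∞) + 1) ^ pt * ∫⁻ y,
                ∑' E : ↥π, ((↑E : Set G) * B).indicator (fun _ => a E ^ pt) y ∂μ :=
                lintegral_const_mul' _ _ hMt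
            _ = ((M : ℝ≥0∞) + 1) ^ pt * ∑' E : ↥π,
                ∫⁻ y, ((↑E : Set G) * B).indicator (fun _ => a E ^ pt) y ∂μ := by
                rw [lintegral_tsum fun E =>
                  (measurable_const.indicator (hBopen.mul_left).measurableSet).aemeasurable]
            _ ≤ ((M : ℝ≥0∞) + 1) ^ pt * ∑' E : ↥π, a E ^ pt * μ (V * B) := by
                refine mul_le_mul_right (ENNReal.tsum_le_tsum fun E => ?_) _
                rw [lintegral_indicator (hBopen.mul_left).measurableSet, setLIntegral_const]
                refine mul_le_mul_right ?_ _
                calc μ ((↑E : Set G) * B) ≤ μ (xp ↑E • (V * B)) := measure_mono (hsubVB E)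
                  _ = μ (V * B) := by rw [measure_smul]
            _ = (((M : ℝ≥0∞) + 1) ^ pt * μ (V * B)) * ∑' E : ↥π, a E ^ pt := by
                rw [ENNReal.tsum_mul_right]; ring
        simp only [blockNorm, partNorm, if_neg hp]
        refine rpow_final _ _ _ ?_
        rw [Dsplit]
        exact hlow
      · -- upper bound
        have hb_piece : ∀ (E : ↥π) (g : G),
            eLpNorm (((xp ↑E * g) • W).indicator f) q μ ^ pt
              ≤ (μ W)⁻¹ * ∫⁻ y, ((xp ↑E * g) • W).indicator (fun _ => (1:ℝ≥0∞)) y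
                  * F y ^ pt ∂μ := by
          intro E g
          set z := xp ↑E * g with hzdef
          set b := eLpNorm ((z • W).indicator f) q μ with hbdef
          have hbF : ∀ y ∈ z • W, b ≤ F y := fun y hy =>
            eLpNorm_indicator_mono_set (hzW_subset z y hy)
          have h1 : b ^ pt * μ W
              ≤ ∫⁻ y, (z • W).indicator (fun _ => (1:ℝ≥0∞)) y * F y ^ pt ∂μ := by
            have hpw : ∀ y, (z • W).indicator (fun _ => (1:ℝ≥0∞)) y * b ^ pt
                ≤ (z • W).indicator (fun _ => (1:ℝ≥0∞)) y * F y ^ pt := by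
              intro y
              by_cases hy : y ∈ z • W
              · simp only [Set.indicator_of_mem hy, one_mul]
                exact ENNReal.rpow_le_rpow (hbF y hy) hpt.le
              · simp [Set.indicator_of_notMem hy]
            have heq2 : (fun y => (z • W).indicator (fun _ => (1:ℝ≥0∞)) y * b ^ pt)
                = (z • W).indicator (fun _ => b ^ pt) := by
              funext y; by_cases hy : y ∈ z • W <;> simp [hy]
            calc b ^ pt * μ W = b ^ pt * μ (z • W) := by rw [measure_smul]
              _ = ∫⁻ y, (z • W).indicator (fun _ => (1:ℝ≥0∞)) y * b ^ pt ∂μ := by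
                  rw [heq2, lintegral_indicator (hWopen.smul z).measurableSet,
                    setLIntegral_const]
              _ ≤ _ := lintegral_mono hpw
          calc b ^ pt = (μ W)⁻¹ * (b ^ pt * μ W) := by
                rw [mul_comm (b ^ pt) (μ W), ← mul_assoc,
                  ENNReal.inv_mul_cancel hμW0 hμWt, one_mul]
            _ ≤ _ := mul_le_mul_right h1 _
        have tsum_finsum : ∀ (t : Finset G) (h : ↥π → G → ℝ≥0∞),
            ∑' E : ↥π, ∑ g ∈ t, h E g = ∑ g ∈ t, ∑' E : ↥π, h E g := by
          intro t h
          induction t using Finset.induction_on with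
          | empty => simp
          | insert _ _ hnotmem ih =>
            rename_i g₀ t'
            simp only [Finset.sum_insert hnotmem]
            rw [ENNReal.tsum_add, ih]
        have hup : ∑' E : ↥π, a E ^ pt
            ≤ ((((s.card : ℝ≥0∞) + 1) *
                ((μ W)⁻¹ * ((∑ g ∈ s, (Nf g : ℝ≥0∞)) + 1)) ^ (1/pt)) ^ pt)
              * ∫⁻ y, F y ^ pt ∂μ := by
          rw [Dsplit]
          have step1 : ∀ E : ↥π, a E ^ pt ≤ (s.card : ℝ≥0∞) ^ pt *
              ∑ g ∈ s, eLpNorm (((xp ↑E * g) • W).indicator f) q μ ^ pt := by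
            intro E
            have h1 : a E ≤ ∑ g ∈ s, eLpNorm (((xp ↑E * g) • W).indicator f) q μ :=
              eLpNorm_indicator_biUnion_le hf hq1 s _
                (fun g _ => (hWopen.smul _).measurableSet) (hEcov E)
            calc a E ^ pt
                ≤ (∑ g ∈ s, eLpNorm (((xp ↑E * g) • W).indicator f) q μ) ^ pt :=
                  ENNReal.rpow_le_rpow h1 hpt.le
              _ ≤ _ := sum_rpow_le s _ hpt
          have step2 : ∀ g : G, ∑' E : ↥π,
              eLpNorm (((xp ↑E * g) • W).indicator f) q μ ^ pt
              ≤ (μ W)⁻¹ * ((Nf g : ℝ≥0∞) * ∫⁻ y, F y ^ pt ∂μ) := by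
            intro g
            calc ∑' E : ↥π, eLpNorm (((xp ↑E * g) • W).indicator f) q μ ^ pt
                ≤ ∑' E : ↥π, (μ W)⁻¹ *
                  ∫⁻ y, ((xp ↑E * g) • W).indicator (fun _ => (1:ℝ≥0∞)) y * F y ^ pt ∂μ :=
                  ENNReal.tsum_le_tsum fun E => hb_piece E g
              _ = (μ W)⁻¹ * ∑' E : ↥π,
                  ∫⁻ y, ((xp ↑E * g) • W).indicator (fun _ => (1:ℝ≥0∞)) y * F y ^ pt ∂μ :=
                  ENNReal.tsum_mul_left
              _ ≤ (μ W)⁻¹ * ∫⁻ y, ∑' E : ↥π,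
                  ((xp ↑E * g) • W).indicator (fun _ => (1:ℝ≥0∞)) y * F y ^ pt ∂μ :=
                  mul_le_mul_right (tsum_lintegral_le' _) _
              _ ≤ (μ W)⁻¹ * ∫⁻ y, (Nf g : ℝ≥0∞) * F y ^ pt ∂μ := by
                  refine mul_le_mul_right (lintegral_mono fun y => ?_) _
                  rw [ENNReal.tsum_mul_right]
                  exact mul_le_mul_left (overlap g y) _
              _ = (μ W)⁻¹ * ((Nf g : ℝ≥0∞) * ∫⁻ y, F y ^ pt ∂μ) := by
                  rw [lintegral_const_mul' _ _ (by simp)]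
          calc ∑' E : ↥π, a E ^ pt
              ≤ ∑' E : ↥π, (s.card : ℝ≥0∞) ^ pt *
                ∑ g ∈ s, eLpNorm (((xp ↑E * g) • W).indicator f) q μ ^ pt :=
                ENNReal.tsum_le_tsum step1
            _ = (s.card : ℝ≥0∞) ^ pt * ∑' E : ↥π,
                ∑ g ∈ s, eLpNorm (((xp ↑E * g) • W).indicator f) q μ ^ pt :=
                ENNReal.tsum_mul_left
            _ = (s.card : ℝ≥0∞) ^ pt * ∑ g ∈ s, ∑' E : ↥π,
                eLpNorm (((xp ↑E * g) • W).indicator f) q μ ^ pt := by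
                rw [tsum_finsum s _]
            _ ≤ (s.card : ℝ≥0∞) ^ pt * ∑ g ∈ s,
                (μ W)⁻¹ * ((Nf g : ℝ≥0∞) * ∫⁻ y, F y ^ pt ∂μ) :=
                mul_le_mul_right (Finset.sum_le_sum fun g _ => step2 g) _
            _ = (s.card : ℝ≥0∞) ^ pt *
                ((μ W)⁻¹ * ((∑ g ∈ s, (Nf g : ℝ≥0∞)) * ∫⁻ y, F y ^ pt ∂μ)) := by
                rw [← Finset.mul_sum, ← Finset.sum_mul]
            _ ≤ ((s.card : ℝ≥0∞) + 1) ^ pt *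
                ((μ W)⁻¹ * (((∑ g ∈ s, (Nf g : ℝ≥0∞)) + 1) * ∫⁻ y, F y ^ pt ∂μ)) := by
                refine mul_le_mul' (ENNReal.rpow_le_rpow le_self_add hpt.le)
                  (mul_le_mul_right (mul_le_mul_left le_self_add _) _)
            _ = ((s.card : ℝ≥0∞) + 1) ^ pt *
                ((μ W)⁻¹ * ((∑ g ∈ s, (Nf g : ℝ≥0∞)) + 1)) * ∫⁻ y, F y ^ pt ∂μ := by
                ring
        simp only [blockNorm, partNorm, if_neg hp]
        exact rpow_final _ _ _ hup
  obtain ⟨D₁, D₂, hD₁0, hD₁t, hD₂0, hD₂t, hmain⟩ := main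
  refine ⟨(D₁⁻¹).toNNReal, D₂.toNNReal, ?_, ?_, ?_⟩
  · exact ENNReal.toNNReal_pos (ENNReal.inv_ne_zero.mpr hD₁t) (ENNReal.inv_ne_top.mpr hD₁0)
  · exact ENNReal.toNNReal_pos hD₂0 hD₂t
  · intro f hf
    obtain ⟨h1, h2⟩ := hmain f hf
    constructor
    · rw [ENNReal.coe_toNNReal (ENNReal.inv_ne_top.mpr hD₁0)]
      calc D₁⁻¹ * blockNorm μ q p B f ≤ D₁⁻¹ * (D₁ * partNorm μ q p π f) :=
            mul_le_mul_right h1 _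
        _ = partNorm μ q p π f := by
            rw [← mul_assoc, ENNReal.inv_mul_cancel hD₁0 hD₁t, one_mul]
    · rw [ENNReal.coe_toNNReal hD₂t]
      exact h2
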